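/- The CBC mode of operation built on the Caesar shift cipher over 3-bit blocks with shift k = 1 or k = 2 is chaotic according to Devaney on (X, d): the map G_g, with g(m, x) = E_k(x ⊕ m) and E_k(y) = y + k mod 8 (identifying 3-bit blocks with integers in {0,…,7} via binary representation), is regular (its periodic points are dense in X), topologically transitive, and has sensitive dependence on initial conditions. -/

import Mathlib

open scoped BigOperators

/-- N-bit blocks: Boolean vectors of length N. -/
abbrev Block (N : ℕ) := Fin N → Bool

/-- Infinite sequences of N-bit blocks. -/
abbrev Msg (N : ℕ) := ℕ → Block N

/-- The phase space X = B^N × S_N. -/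
abbrev Phase (N : ℕ) := Block N × Msg N

/-- Hamming distance d_e on B^N. -/
noncomputable def dE {N : ℕ} (x y : Block N) : ℝ :=
  ∑ j : Fin N, if x j = y j then (0 : ℝ) else 1

/-- Distance d_m on message sequences. -/
noncomputable def dM {N : ℕ} (m m' : Msg N) : ℝ :=
  (9 / (N : ℝ)) * ∑' k : ℕ, (∑ i : Fin N, if m k i = m' k i then (0 : ℝ) else 1) / 10 ^ (k + 1)

/-- The distance d on the phase space X. -/
noncomputable def dX {N : ℕ} (P Q : Phase N) : ℝ :=
  dE P.1 Q.1 + dM P.2 Q.2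

/-- The shift on message sequences. -/
def shiftMsg {N : ℕ} (m : Msg N) : Msg N := fun k => m (k + 1)

/-- The dynamical system G_g(x, m) = (g(m^0, x), σ(m)). -/
def Gg {N : ℕ} (g : Block N → Block N → Block N) (P : Phase N) : Phase N :=
  (g (P.2 0) P.1, shiftMsg P.2)

/-- Open sets for the topology induced by the distance d on X. -/
def IsOpenX {N : ℕ} (U : Set (Phase N)) : Prop :=
  ∀ P ∈ U, ∃ ε : ℝ, 0 < ε ∧ ∀ Q : Phase N, dX P Q < ε → Q ∈ U

/-- A 3-bit block read in the binary numeral system, counting from the left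
(bit 1 is the most significant). -/
def blockToNat (x : Block 3) : ℕ :=
  (if x 0 then 4 else 0) + (if x 1 then 2 else 0) + (if x 2 then 1 else 0)

/-- The 3-bit block representing y mod 8 in binary, counting from the left. -/
def natToBlock (y : ℕ) : Block 3 :=
  fun j => Nat.testBit (y % 8) (2 - j.val)

/-- The Caesar shift cipher E_k(y) = y + k mod 8, acting on 3-bit blocks via the binary
identification with {0, …, 7}. -/
def caesar (k : ℕ) (x : Block 3) : Block 3 :=
  natToBlock (blockToNat x + k)

/-- The CBC iterate function for the Caesar cipher: g(m, x) = E_k(x ⊕ m). -/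
def caesarCBC (k : ℕ) (m x : Block 3) : Block 3 :=
  caesar k (fun j => Bool.xor (x j) (m j))

/-! ### Auxiliary lemmas -/

noncomputable def dmTerm (m m' : Msg 3) (k : ℕ) : ℝ :=
  (∑ i : Fin 3, if m k i = m' k i then (0 : ℝ) else 1) / 10 ^ (k + 1)

lemma dmTerm_nonneg (m m' : Msg 3) (k : ℕ) : 0 ≤ dmTerm m m' k := by
  apply div_nonneg
  · apply Finset.sum_nonneg; intro i _; split <;> norm_num
  · positivity

lemma dmTerm_le (m m' : Msg 3) (k : ℕ) : dmTerm m m' k ≤ 3 * ((10 : ℝ)⁻¹) ^ (k + 1) := by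
  unfold dmTerm
  rw [div_le_iff₀ (by positivity)]
  have h1 : (∑ i : Fin 3, if m k i = m' k i then (0 : ℝ) else 1) ≤ 3 := by
    calc (∑ i : Fin 3, if m k i = m' k i then (0 : ℝ) else 1)
        ≤ ∑ _i : Fin 3, (1 : ℝ) := by
          apply Finset.sum_le_sum; intro i _; split <;> norm_num
      _ = 3 := by simp
  calc (∑ i : Fin 3, if m k i = m' k i then (0 : ℝ) else 1) ≤ 3 := h1
    _ = 3 * ((10 : ℝ)⁻¹) ^ (k + 1) * 10 ^ (k + 1) := by
        rw [mul_assoc, inv_pow, inv_mul_cancel₀ (by positivity)]; ring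

lemma dmTerm_summable (m m' : Msg 3) : Summable (dmTerm m m') := by
  apply Summable.of_nonneg_of_le (dmTerm_nonneg m m') (dmTerm_le m m')
  have h : Summable (fun n : ℕ => 3 * ((10 : ℝ)⁻¹) ^ n) :=
    (summable_geometric_of_lt_one (by norm_num) (by norm_num)).mul_left 3
  exact (summable_nat_add_iff 1).mpr h

lemma dM_eq (m m' : Msg 3) : dM m m' = 3 * ∑' k, dmTerm m m' k := by
  unfold dM dmTerm
  norm_num

lemma dM_nonneg (m m' : Msg 3) : 0 ≤ dM m m' := by
  rw [dM_eq]
  have : 0 ≤ ∑' k, dmTerm m m' k := tsum_nonneg (dmTerm_nonneg m m')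
  linarith

lemma dM_self (m : Msg 3) : dM m m = 0 := by
  simp [dM]

lemma dE_self (x : Block 3) : dE x x = 0 := by simp [dE]

lemma one_le_dE {x y : Block 3} (h : x ≠ y) : 1 ≤ dE x y := by
  obtain ⟨j, hj⟩ : ∃ j, x j ≠ y j := by
    by_contra hc; push_neg at hc; exact h (funext hc)
  unfold dE
  have := Finset.single_le_sum (f := fun i : Fin 3 => if x i = y i then (0 : ℝ) else 1)
    (fun i _ => by split <;> norm_num) (Finset.mem_univ j)
  simpa [hj] using this

lemma dM_le_of_agree (m m' : Msg 3) (n : ℕ) (h : ∀ j, j < n → m j = m' j) :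
    dM m m' ≤ ((10 : ℝ)⁻¹) ^ n := by
  rw [dM_eq]
  have hs := dmTerm_summable m m'
  have h0 : ∀ j ∈ Finset.range n, dmTerm m m' j = 0 := by
    intro j hj
    rw [Finset.mem_range] at hj
    unfold dmTerm
    simp [h j hj]
  have key := Summable.sum_add_tsum_nat_add (f := dmTerm m m') n hs
  rw [← key, Finset.sum_eq_zero h0, zero_add]
  have hb : ∀ i, dmTerm m m' (i + n) ≤ (3 * ((10 : ℝ)⁻¹) ^ (n + 1)) * ((10 : ℝ)⁻¹) ^ i := by
    intro i
    calc dmTerm m m' (i + n) ≤ 3 * ((10 : ℝ)⁻¹) ^ (i + n + 1) := dmTerm_le m m' (i + n)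
      _ = (3 * ((10 : ℝ)⁻¹) ^ (n + 1)) * ((10 : ℝ)⁻¹) ^ i := by ring
  have hsum2 : Summable (fun i : ℕ => (3 * ((10 : ℝ)⁻¹) ^ (n + 1)) * ((10 : ℝ)⁻¹) ^ i) :=
    (summable_geometric_of_lt_one (by norm_num) (by norm_num)).mul_left _
  have hle := Summable.tsum_le_tsum hb ((summable_nat_add_iff n).mpr hs) hsum2
  rw [tsum_mul_left, tsum_geometric_of_lt_one (by norm_num) (by norm_num)] at hle
  have heq : 3 * ((3 * ((10 : ℝ)⁻¹) ^ (n + 1)) * (1 - (10 : ℝ)⁻¹)⁻¹) = ((10 : ℝ)⁻¹) ^ n := by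
    rw [pow_succ]
    norm_num
    ring
  linarith

/-- The orbit of the first coordinate. -/
def orbitSt (g : Block 3 → Block 3 → Block 3) (x : Block 3) (m : Msg 3) : ℕ → Block 3
  | 0 => x
  | n + 1 => g (m n) (orbitSt g x m n)

lemma Gg_iter (g : Block 3 → Block 3 → Block 3) (x : Block 3) (m : Msg 3) (n : ℕ) :
    (Gg g)^[n] (x, m) = (orbitSt g x m n, fun j => m (j + n)) := by
  induction n with
  | zero => simp [orbitSt]
  | succ n ih =>
    rw [Function.iterate_succ_apply', ih]
    unfold Gg shiftMsg
    simp only [orbitSt]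
    congr 1
    · rw [Nat.zero_add]
    · funext j
      have he : j + 1 + n = j + (n + 1) := by omega
      rw [he]

lemma orbitSt_congr (g : Block 3 → Block 3 → Block 3) (x : Block 3) (m m' : Msg 3) (n : ℕ)
    (h : ∀ j, j < n → m j = m' j) : orbitSt g x m n = orbitSt g x m' n := by
  induction n with
  | zero => rfl
  | succ n ih =>
    simp only [orbitSt]
    rw [h n (Nat.lt_succ_self n), ih (fun j hj => h j (hj.trans (Nat.lt_succ_self n)))]

lemma cbc_surj (k : ℕ) (hk : k = 1 ∨ k = 2) :
    ∀ x y : Block 3, ∃ a : Block 3, caesarCBC k a x = y := by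
  rcases hk with h | h <;> subst h <;> decide

lemma cbc_inj (k : ℕ) (hk : k = 1 ∨ k = 2) :
    ∀ x a b : Block 3, caesarCBC k a x = caesarCBC k b x → a = b := by
  rcases hk with h | h <;> subst h <;> decide

def flip0 (b : Block 3) : Block 3 := fun j => if j = 0 then !(b j) else b j

lemma flip0_ne (b : Block 3) : flip0 b ≠ b := by
  intro h
  have := congrFun h 0
  simp [flip0] at this

/-- the CBC mode built on the Caesar shift cipher over 3-bit blocks with
shift k = 1 or k = 2 is chaotic according to Devaney: G_g is regular, topologically
transitive, and has sensitive dependence on initial conditions. -/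
theorem caesar_cbc_chaotic (k : ℕ) (hk : k = 1 ∨ k = 2) :
    (∀ (P : Phase 3) (ε : ℝ), 0 < ε →
        ∃ (Q : Phase 3) (n : ℕ), 1 ≤ n ∧ (Gg (caesarCBC k))^[n] Q = Q ∧ dX P Q < ε) ∧
    (∀ U V : Set (Phase 3), IsOpenX U → IsOpenX V → U.Nonempty → V.Nonempty →
        ∃ n : ℕ, 0 < n ∧ ((Gg (caesarCBC k))^[n] '' U ∩ V).Nonempty) ∧
    (∃ δ : ℝ, 0 < δ ∧ ∀ P : Phase 3, ∀ V : Set (Phase 3), IsOpenX V → P ∈ V →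
        ∃ Q ∈ V, ∃ n : ℕ, 0 < n ∧
          dX ((Gg (caesarCBC k))^[n] P) ((Gg (caesarCBC k))^[n] Q) > δ) := by
  have hsurj := cbc_surj k hk
  have hinj := cbc_inj k hk
  refine ⟨?_, ?_, ?_⟩
  · -- regularity
    rintro ⟨x, m⟩ ε hε
    obtain ⟨n, hn⟩ := exists_pow_lt_of_lt_one hε (show ((10 : ℝ)⁻¹) < 1 by norm_num)
    obtain ⟨sol, hsol⟩ := hsurj (orbitSt (caesarCBC k) x m n) x
    set m' : Msg 3 := fun i => if i % (n + 1) < n then m (i % (n + 1)) else sol with hm'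
    have hagree : ∀ j, j < n → m j = m' j := by
      intro j hj
      simp only [hm']
      rw [Nat.mod_eq_of_lt (by omega), if_pos hj]
    refine ⟨(x, m'), n + 1, by omega, ?_, ?_⟩
    · rw [Gg_iter]
      have h1 : orbitSt (caesarCBC k) x m' (n + 1) = x := by
        simp only [orbitSt]
        rw [← orbitSt_congr _ x m m' n hagree]
        have hmn : m' n = sol := by
          simp only [hm']
          rw [Nat.mod_eq_of_lt (Nat.lt_succ_self n), if_neg (lt_irrefl n)]
        rw [hmn, hsol]
      have h2 : (fun j => m' (j + (n + 1))) = m' := by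
        funext j
        simp only [hm', Nat.add_mod_right]
      rw [h1, h2]
    · show dE x x + dM m m' < ε
      rw [dE_self]
      have := dM_le_of_agree m m' n hagree
      linarith
  · -- transitivity
    rintro U V hU _hV ⟨⟨x, m⟩, hPU⟩ ⟨Q, hQV⟩
    obtain ⟨ε, hε, hball⟩ := hU (x, m) hPU
    obtain ⟨n, hn⟩ := exists_pow_lt_of_lt_one hε (show ((10 : ℝ)⁻¹) < 1 by norm_num)
    obtain ⟨sol, hsol⟩ := hsurj (orbitSt (caesarCBC k) x m n) Q.1
    set m'' : Msg 3 := fun i => if i < n then m i else if i = n then sol else Q.2 (i - (n + 1))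
      with hm''
    have hagree : ∀ j, j < n → m j = m'' j := by
      intro j hj
      simp only [hm'']
      rw [if_pos hj]
    have hRU : ((x, m'') : Phase 3) ∈ U := by
      apply hball
      show dE x x + dM m m'' < ε
      rw [dE_self]
      have := dM_le_of_agree m m'' n hagree
      linarith
    refine ⟨n + 1, by omega, Q, ⟨(x, m''), hRU, ?_⟩, hQV⟩
    rw [Gg_iter]
    have h1 : orbitSt (caesarCBC k) x m'' (n + 1) = Q.1 := by
      simp only [orbitSt]
      rw [← orbitSt_congr _ x m m'' n hagree]
      have hmn : m'' n = sol := by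
        simp only [hm'']
        rw [if_neg (lt_irrefl n)]
        simp
      rw [hmn, hsol]
    have h2 : (fun j => m'' (j + (n + 1))) = Q.2 := by
      funext j
      simp only [hm'']
      have ha : ¬ (j + (n + 1) < n) := by omega
      have hb : ¬ (j + (n + 1) = n) := by omega
      rw [if_neg ha, if_neg hb, Nat.add_sub_cancel]
    rw [h1, h2]
  · -- sensitivity
    refine ⟨1 / 2, by norm_num, ?_⟩
    rintro ⟨x, m⟩ V hV hPV
    obtain ⟨ε, hε, hball⟩ := hV (x, m) hPV
    obtain ⟨n, hn⟩ := exists_pow_lt_of_lt_one hε (show ((10 : ℝ)⁻¹) < 1 by norm_num)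
    set m'' : Msg 3 := fun i => if i = n then flip0 (m n) else m i with hm''
    have hagree : ∀ j, j < n → m j = m'' j := by
      intro j hj
      simp only [hm'']
      rw [if_neg (by omega)]
    have hQV : ((x, m'') : Phase 3) ∈ V := by
      apply hball
      show dE x x + dM m m'' < ε
      rw [dE_self]
      have := dM_le_of_agree m m'' n hagree
      linarith
    refine ⟨(x, m''), hQV, n + 1, by omega, ?_⟩
    rw [Gg_iter, Gg_iter]
    show dE _ _ + dM _ _ > 1 / 2
    have htail : (fun j => m (j + (n + 1))) = (fun j => m'' (j + (n + 1))) := by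
      funext j
      simp only [hm'']
      rw [if_neg (by omega)]
    have hstate : orbitSt (caesarCBC k) x m (n + 1) ≠ orbitSt (caesarCBC k) x m'' (n + 1) := by
      simp only [orbitSt]
      rw [← orbitSt_congr _ x m m'' n hagree]
      have hmn : m'' n = flip0 (m n) := by
        simp only [hm'', if_pos rfl]
      rw [hmn]
      intro hcontra
      exact flip0_ne (m n) (hinj _ _ _ hcontra.symm)
    have h1 := one_le_dE hstate
    rw [htail, dM_self]
    linarith
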